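/- Let E be the pencil diagram of 4-tuples of integers. For every diagram entry (i,j), the first component D of E(i,j) (the degree of the generic element of the elliptic pencil at that entry) satisfies D = 3·(1 + c(i,j)² + d(i,j)² − c(i,j) + d(i,j) − c(i,j)·d(i,j)), where c(1,1) = 1, d(1,1) = −1, and for i ≥ 2: if i is even and 1 ≤ j ≤ i/2+1 then c(i,j) = 1 − j and d(i,j) = i/2 + 1 − j; if i is odd and 1 ≤ j ≤ (i−1)/2+1 then c(i,j) = j and d(i,j) = j − (i−1)/2 − 2. -/

import Mathlib

/-- Effect of the quadratic Cremona map `Q₁` (indeterminacy at `P₃(1)`) on the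
degree/multiplicity data `(d, m₁, m_τ, m_{τ²})`. -/
def cremQ1 (v : ℤ × ℤ × ℤ × ℤ) : ℤ × ℤ × ℤ × ℤ :=
  (2 * v.1 - 3 * v.2.1, v.1 - 2 * v.2.1, v.2.2.2, v.2.2.1)

/-- Effect of the quadratic Cremona map `Q_τ` (indeterminacy at `P₃(τ)`). -/
def cremQt (v : ℤ × ℤ × ℤ × ℤ) : ℤ × ℤ × ℤ × ℤ :=
  (2 * v.1 - 3 * v.2.2.1, v.2.2.2, v.1 - 2 * v.2.2.1, v.2.1)

/-- Effect of the quadratic Cremona map `Q_{τ²}` (indeterminacy at `P₃(τ²)`). -/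
def cremQt2 (v : ℤ × ℤ × ℤ × ℤ) : ℤ × ℤ × ℤ × ℤ :=
  (2 * v.1 - 3 * v.2.2.2, v.2.2.1, v.2.1, v.1 - 2 * v.2.2.2)

/-- `E` is the pencil diagram of `4`-tuples of integers: `E (1,1) = (6,3,1,1)`,
`E (2k,1) = Q_τ (E (2k-1,1))` for `k ≥ 1`, `E (2k+1,j) = Q₁ (E (2k,j))` for all valid `j`
(row `2k` and row `2k+1` have `k+1` columns), and `E (2k,j+1) = Q_{τ²} (Q_τ (E (2k,j)))`
for all valid `j`. -/
def IsPencilDiagram (E : ℕ → ℕ → ℤ × ℤ × ℤ × ℤ) : Prop :=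
  E 1 1 = (6, 3, 1, 1) ∧
  (∀ k : ℕ, 1 ≤ k → E (2 * k) 1 = cremQt (E (2 * k - 1) 1)) ∧
  (∀ k j : ℕ, 1 ≤ k → 1 ≤ j → j ≤ k + 1 → E (2 * k + 1) j = cremQ1 (E (2 * k) j)) ∧
  (∀ k j : ℕ, 1 ≤ k → 1 ≤ j → j ≤ k → E (2 * k) (j + 1) = cremQt2 (cremQt (E (2 * k) j)))


/-- Closed form for even rows: `E (2k, j)`. -/
def evRow (k j : ℕ) : ℤ × ℤ × ℤ × ℤ :=
  let K : ℤ := k; let J : ℤ := j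
  (6 + 6*K - 6*J + 3*K^2 - 3*K*J + 3*J^2,
   1 + K - 2*J + K^2 - K*J + J^2,
   3 + 3*K - 3*J + K^2 - K*J + J^2,
   1 + 2*K - J + K^2 - K*J + J^2)

/-- Closed form for odd rows: `E (2k+1, j)`. -/
def odRow (k j : ℕ) : ℤ × ℤ × ℤ × ℤ :=
  let K : ℤ := k; let J : ℤ := j
  (9 + 9*K - 6*J + 3*K^2 - 3*K*J + 3*J^2,
   4 + 4*K - 2*J + K^2 - K*J + J^2,
   1 + 2*K - J + K^2 - K*J + J^2,
   3 + 3*K - 3*J + K^2 - K*J + J^2)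

lemma q1_ev (k j : ℕ) : cremQ1 (evRow k j) = odRow k j := by
  simp only [cremQ1, evRow, odRow, Prod.mk.injEq]
  push_cast
  and_intros <;> try ring
  all_goals trivial

lemma qt2qt_ev (k j : ℕ) : cremQt2 (cremQt (evRow k j)) = evRow k (j + 1) := by
  simp only [cremQt, cremQt2, evRow, Prod.mk.injEq]
  push_cast
  and_intros <;> try ring

lemma qt_od (k : ℕ) : cremQt (odRow k 1) = evRow (k + 1) 1 := by
  simp only [cremQt, odRow, evRow, Prod.mk.injEq]
  push_cast
  and_intros <;> try ring

lemma even_row (E : ℕ → ℕ → ℤ × ℤ × ℤ × ℤ) (hE : IsPencilDiagram E) :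
    ∀ k : ℕ, 1 ≤ k → ∀ j : ℕ, 1 ≤ j → j ≤ k + 1 → E (2 * k) j = evRow k j := by
  obtain ⟨h1, h2, h3, h4⟩ := hE
  intro k hk
  induction k, hk using Nat.le_induction with
  | base =>
    have hb : E 2 1 = evRow 1 1 := by
      have := h2 1 le_rfl
      simp only [show 2 * 1 = 2 from rfl, show 2 * 1 - 1 = 1 from rfl] at this
      rw [this, h1]
      simp [cremQt, evRow]
    intro j hj
    induction j, hj using Nat.le_induction with
    | base => intro _; exact hb
    | succ j hj ih =>
      intro hj2
      have hjk : j ≤ 1 := by omega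
      have := h4 1 j le_rfl hj hjk
      rw [show 2 * 1 = 2 from rfl] at this ⊢
      rw [this, ih (by omega), qt2qt_ev]
  | succ k hk ih =>
    have hb : E (2 * (k + 1)) 1 = evRow (k + 1) 1 := by
      have ho : E (2 * k + 1) 1 = odRow k 1 := by
        rw [h3 k 1 hk le_rfl (by omega), ih 1 le_rfl (by omega), q1_ev]
      have := h2 (k + 1) (by omega)
      rw [show 2 * (k + 1) - 1 = 2 * k + 1 by omega] at this
      rw [this, ho, qt_od]
    intro j hj
    induction j, hj using Nat.le_induction with
    | base => intro _; exact hb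
    | succ j hj ih2 =>
      intro hj2
      rw [h4 (k + 1) j (by omega) hj (by omega), ih2 (by omega), qt2qt_ev]

lemma odd_row (E : ℕ → ℕ → ℤ × ℤ × ℤ × ℤ) (hE : IsPencilDiagram E) :
    ∀ k : ℕ, 1 ≤ k → ∀ j : ℕ, 1 ≤ j → j ≤ k + 1 → E (2 * k + 1) j = odRow k j := by
  intro k hk j hj hjk
  rw [hE.2.2.1 k j hk hj hjk, even_row E hE k hk j hj hjk, q1_ev]

/-- For every diagram entry, the first component `D` of `E (i,j)` (the degree of the
generic element of the elliptic pencil at that entry) satisfies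
`D = 3·(1 + c² + d² - c + d - c·d)`, where `c (1,1) = 1`, `d (1,1) = -1`, and for `i ≥ 2`:
if `i = 2k` is even then `c = 1 - j`, `d = i/2 + 1 - j`; if `i = 2k+1` is odd then
`c = j`, `d = j - (i-1)/2 - 2`. -/
theorem degree_of_generic_elliptic_element
    (E : ℕ → ℕ → ℤ × ℤ × ℤ × ℤ) (hE : IsPencilDiagram E) :
    (E 1 1).1 = 3 * (1 + (1 : ℤ) ^ 2 + (-1 : ℤ) ^ 2 - 1 + (-1) - 1 * (-1)) ∧
    ∀ k j : ℕ, 1 ≤ k → 1 ≤ j → j ≤ k + 1 →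
      (E (2 * k) j).1 =
        3 * (1 + (1 - (j : ℤ)) ^ 2 + ((k : ℤ) + 1 - (j : ℤ)) ^ 2
          - (1 - (j : ℤ)) + ((k : ℤ) + 1 - (j : ℤ))
          - (1 - (j : ℤ)) * ((k : ℤ) + 1 - (j : ℤ))) ∧
      (E (2 * k + 1) j).1 =
        3 * (1 + (j : ℤ) ^ 2 + ((j : ℤ) - (k : ℤ) - 2) ^ 2
          - (j : ℤ) + ((j : ℤ) - (k : ℤ) - 2)
          - (j : ℤ) * ((j : ℤ) - (k : ℤ) - 2)) := by
  refine ⟨by rw [hE.1]; norm_num, fun k j hk hj hjk => ⟨?_, ?_⟩⟩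
  · rw [even_row E hE k hk j hj hjk]; simp only [evRow]; push_cast; ring
  · rw [odd_row E hE k hk j hj hjk]; simp only [odRow]; push_cast; ring
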